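/- For every integer μ ≥ 0 there is a compact subset C ⊆ SL₂(F) such that {g ∈ SL₂(F) : Cartan(θ(g)⁻¹g) ≤ μ} ⊆ H·C. Consequently the truncation function ω̄(·, μ), which is left H-invariant and locally constant, is compactly supported as a function on the quotient H\G. -/

import Mathlib

open MeasureTheory Matrix Filter
open scoped Classical Topology Pointwise

noncomputable section

abbrev Mat (F : Type) [Field F] : Type := Matrix (Fin 2) (Fin 2) F

abbrev SL2 (F : Type) [Field F] : Type := Matrix.SpecialLinearGroup (Fin 2) F

instance (F : Type) [Field F] [MeasurableSpace F] : MeasurableSpace (Mat F) :=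
  inferInstanceAs (MeasurableSpace (Fin 2 → Fin 2 → F))

instance (F : Type) [Field F] [MeasurableSpace F] : MeasurableSpace (SL2 F) :=
  inferInstanceAs (MeasurableSpace { A : Mat F // A.det = 1 })

instance (F : Type) [Field F] [TopologicalSpace F] : TopologicalSpace (Mat F) :=
  inferInstanceAs (TopologicalSpace (Fin 2 → Fin 2 → F))

instance (F : Type) [Field F] [TopologicalSpace F] : TopologicalSpace (SL2 F) :=
  inferInstanceAs (TopologicalSpace { A : Mat F // A.det = 1 })

variable {F : Type} [Field F]

/-- The ring of integers of `F`, described via the valuation `ν`. -/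
def Oset (ν : F → ℤ) : Set F := {x : F | x = 0 ∨ 0 ≤ ν x}

/-- The maximal compact subgroup `K = SL₂(𝒪)` of `SL₂(F)`. -/
def Kset (ν : F → ℤ) : Set (SL2 F) :=
  {g : SL2 F | ∀ i j : Fin 2, (g : Mat F) i j ∈ Oset ν}

/-- `CartanLE ν g μ` says that `Cartan(g) = -min_{i,j} ν(g i j) ≤ μ`. -/
def CartanLE (ν : F → ℤ) (g : Mat F) (μ : ℤ) : Prop :=
  ∀ i j : Fin 2, g i j = 0 ∨ -μ ≤ ν (g i j)

/-- The valuation extended by `ν(0) = ⊤`. -/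
def nuExt (ν : F → ℤ) (x : F) : WithTop ℤ := if x = 0 then ⊤ else (ν x : WithTop ℤ)

/-- The normalized absolute value `|x| = q^(-ν x)`. -/
def absF (q : ℕ) (ν : F → ℤ) (x : F) : ℝ := if x = 0 then 0 else (q : ℝ) ^ (-(ν x))

/-- The involution `θ = Inn(diag(1,-1))` on `SL₂(F)`. -/
def thetaSL (g : SL2 F) : SL2 F :=
  ⟨!![(g : Mat F) 0 0, -((g : Mat F) 0 1); -((g : Mat F) 1 0), (g : Mat F) 1 1], by
    have h : ((g : Mat F)).det = 1 := g.2
    rw [Matrix.det_fin_two] at h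
    rw [Matrix.det_fin_two_of]
    linear_combination h⟩

/-- The map `τ(g) = θ(g)⁻¹ g`. -/
def tauSL (g : SL2 F) : SL2 F := (thetaSL g)⁻¹ * g

/-- Arthur's truncation function `ω̄(g,μ)`. -/
def omegaBar (ν : F → ℤ) (g : SL2 F) (μ : ℤ) : ℝ :=
  if CartanLE ν ((tauSL g : Mat F)) μ then 1 else 0

/-- `diag(a, a⁻¹)`, the parametrization of the torus `H`. -/
def Hmat (a : F) : SL2 F :=
  if h : a ≠ 0 then
    ⟨!![a, 0; 0, a⁻¹], by rw [Matrix.det_fin_two_of]; field_simp; ring⟩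
  else 1

/-- The parametrization of the split torus `A = {[[x,y],[y,x]] : x² - y² = 1}` by
`t = x + y ∈ F^×`. -/
def Amat [CharZero F] (t : F) : SL2 F :=
  if h : t ≠ 0 then
    ⟨!![(t + t⁻¹) / 2, (t - t⁻¹) / 2; (t - t⁻¹) / 2, (t + t⁻¹) / 2], by
      rw [Matrix.det_fin_two_of]; field_simp; ring⟩
  else 1

/-- The unipotent radical `N` of the Borel `B` stabilizing `F·(1,1)ᵀ`. -/
def NBel (s : F) : SL2 F :=
  ⟨!![1 + s, -s; s, 1 - s], by rw [Matrix.det_fin_two_of]; ring⟩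

/-- The unipotent radical `N̄` of the opposite Borel `B̄` stabilizing `F·(1,-1)ᵀ`. -/
def NBbarel (s : F) : SL2 F :=
  ⟨!![1 + s, s; -s, 1 - s], by rw [Matrix.det_fin_two_of]; ring⟩

/-- Upper triangular unipotent `[[1,s],[0,1]]`. -/
def UpT (s : F) : SL2 F :=
  ⟨!![1, s; 0, 1], by rw [Matrix.det_fin_two_of]; ring⟩

/-- The element `r_γ` attached to a square root `δ` of `γ`. -/
def rmat [CharZero F] (δ : F) : SL2 F :=
  if h : δ ≠ 0 then
    ⟨!![(1 + δ) / 2, (δ - 1) / 2; (δ - 1) / (2 * δ), (1 + δ) / (2 * δ)], by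
      rw [Matrix.det_fin_two_of]; field_simp; ring⟩
  else 1

/-- `diag(ϖ^(-m), ϖ^m)`. -/
def Dmat (ϖ : F) (m : ℤ) : SL2 F :=
  if h : ϖ ≠ 0 then
    ⟨!![ϖ ^ (-m), 0; 0, ϖ ^ m], by
      have h' : ϖ ^ m ≠ 0 := zpow_ne_zero _ h
      rw [Matrix.det_fin_two_of, _root_.zpow_neg]
      field_simp; ring⟩
  else 1

/-- Conjugation action: `g⁻¹ X g` for `g ∈ SL₂(F)` and a matrix `X`. -/
def SL2conj (g : SL2 F) (X : Mat F) : Mat F :=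
  ((g⁻¹ : SL2 F) : Mat F) * X * ((g : SL2 F) : Mat F)

/-- Coordinates on the Lie algebra `𝔰𝔩₂`: `(a,b,c) ↦ [[a,b],[c,-a]]`. -/
def M3 (v : F × F × F) : Mat F := !![v.1, v.2.1; v.2.2, -v.1]

/-- The antidiagonal matrix `[[0,b],[c,0]] ∈ 𝔥^⊥`. -/
def antidiag (b c : F) : Mat F := !![0, b; c, 0]

/-- The diagonal matrix `diag(h,-h) ∈ 𝔥`. -/
def diagMat (h : F) : Mat F := !![h, 0; 0, -h]

/-- The Fourier transform on `𝔰𝔩₂(F)` with respect to the character `ψ ∘ tr(XY)` and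
the (self-dual) Haar measure `volg` in the coordinates `M3`. -/
def FT [MeasurableSpace F] (ψ : F → ℂ) (volg : Measure (F × F × F))
    (f : Mat F → ℂ) (Y : Mat F) : ℂ :=
  ∫ v : F × F × F, f (M3 v) * ψ ((M3 v * Y).trace) ∂volg

/-- `f̃(X) = ∫_K f̂(k⁻¹ X k) dk`. -/
def Ktilde [MeasurableSpace F] (ψ : F → ℂ) (volg : Measure (F × F × F))
    (volK : Measure (SL2 F)) (f : Mat F → ℂ) (X : Mat F) : ℂ :=
  ∫ k : SL2 F, FT ψ volg f (SL2conj k X) ∂volK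

/-- The diagonal torus `H`, the fixed points of `θ`. -/
def Hset : Set (SL2 F) :=
  {g : SL2 F | (g : Mat F) 0 1 = 0 ∧ (g : Mat F) 1 0 = 0}

/-- The split torus `A`. -/
def Aset : Set (SL2 F) :=
  {g : SL2 F | ∃ x y : F, (g : Mat F) = !![x, y; y, x]}

/-- The centralizer `T_γ` of `𝔱_γ` in `SL₂(F)`. -/
def Tset (γ : F) : Set (SL2 F) :=
  {g : SL2 F | ∀ b : F, (g : Mat F) * antidiag (b * γ) b = antidiag (b * γ) b * (g : Mat F)}

/-- `d(g) = max(|H_B(g)|, |H_B̄(g)|)`. -/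
def dOf (HB HBbar : SL2 F → ℤ) (g : SL2 F) : ℤ := max |HB g| |HBbar g|

section MyAux
variable {F : Type} [Field F]

lemma theta_coe (g : SL2 F) : (thetaSL g : Mat F) =
    !![(g : Mat F) 0 0, -((g : Mat F) 0 1); -((g : Mat F) 1 0), (g : Mat F) 1 1] := rfl

lemma theta_fixed {h : SL2 F} (hh : h ∈ (Hset : Set (SL2 F))) : thetaSL h = h := by
  obtain ⟨h1, h2⟩ := hh
  apply Subtype.ext
  rw [theta_coe]
  ext i j
  fin_cases i <;> fin_cases j <;> simp [h1, h2]

lemma Hmat_coe {t : F} (ht : t ≠ 0) : (Hmat t : Mat F) = !![t, 0; 0, t⁻¹] := by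
  rw [Hmat]
  exact congrArg Subtype.val (dif_pos ht)

lemma Hmat_mem (t : F) : Hmat t ∈ (Hset : Set (SL2 F)) := by
  by_cases ht : t ≠ 0
  · constructor <;> simp [Hmat_coe ht]
  · have e : Hmat t = 1 := dif_neg ht
    rw [e]
    exact ⟨Matrix.one_apply_ne (by decide : (0 : Fin 2) ≠ 1), Matrix.one_apply_ne (by decide : (1 : Fin 2) ≠ 0)⟩

lemma Hmat_inv_coe {t : F} (ht : t ≠ 0) : (((Hmat t)⁻¹ : SL2 F) : Mat F) = !![t⁻¹, 0; 0, t] := by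
  rw [Matrix.SpecialLinearGroup.coe_inv, Hmat_coe ht, Matrix.adjugate_fin_two]
  norm_num

lemma Hmat_inv_mul_coe {t : F} (ht : t ≠ 0) (g : SL2 F) :
    (((Hmat t)⁻¹ * g : SL2 F) : Mat F) =
    !![t⁻¹ * (g : Mat F) 0 0, t⁻¹ * (g : Mat F) 0 1;
       t * (g : Mat F) 1 0, t * (g : Mat F) 1 1] := by
  rw [Matrix.SpecialLinearGroup.coe_mul, Hmat_inv_coe ht]
  ext i j
  fin_cases i <;> fin_cases j <;> simp [Matrix.mul_apply, Fin.sum_univ_two]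

lemma det_coords (g : SL2 F) :
    (g : Mat F) 0 0 * (g : Mat F) 1 1 - (g : Mat F) 0 1 * (g : Mat F) 1 0 = 1 := by
  have h := g.2
  rwa [Matrix.det_fin_two] at h

end MyAux

section MyAux
variable {F : Type} [Field F]

lemma theta_mul (x y : SL2 F) : thetaSL (x * y) = thetaSL x * thetaSL y := by
  apply Subtype.ext
  show (thetaSL (x*y) : Mat F) = (thetaSL x : Mat F) * (thetaSL y : Mat F)
  rw [theta_coe, theta_coe, theta_coe]
  have hc : ((x*y : SL2 F) : Mat F) = (x : Mat F) * (y : Mat F) :=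
    Matrix.SpecialLinearGroup.coe_mul x y
  ext i j
  fin_cases i <;> fin_cases j <;>
    simp [hc, Matrix.mul_apply, Fin.sum_univ_two] <;> ring

lemma tau_coe (g : SL2 F) : (tauSL g : Mat F) =
    !![(g : Mat F) 0 0 * (g : Mat F) 1 1 + (g : Mat F) 0 1 * (g : Mat F) 1 0,
       2 * ((g : Mat F) 0 1 * (g : Mat F) 1 1);
       2 * ((g : Mat F) 0 0 * (g : Mat F) 1 0),
       (g : Mat F) 0 0 * (g : Mat F) 1 1 + (g : Mat F) 0 1 * (g : Mat F) 1 0] := by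
  show ((thetaSL g)⁻¹ * g : SL2 F).val = _
  rw [Matrix.SpecialLinearGroup.coe_mul, Matrix.SpecialLinearGroup.coe_inv, theta_coe,
    Matrix.adjugate_fin_two]
  ext i j
  fin_cases i <;> fin_cases j <;>
    simp [Matrix.mul_apply, Fin.sum_univ_two] <;> ring

end MyAux
section NuAux
variable {F : Type} [Field F] (ν : F → ℤ)

lemma nu_one (hνmul : ∀ x y : F, x ≠ 0 → y ≠ 0 → ν (x * y) = ν x + ν y) :
    ν 1 = 0 := by
  have h := hνmul 1 1 one_ne_zero one_ne_zero
  rw [one_mul] at h; omega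

lemma nu_neg_one (hνmul : ∀ x y : F, x ≠ 0 → y ≠ 0 → ν (x * y) = ν x + ν y) :
    ν (-1) = 0 := by
  have h := hνmul (-1) (-1) (neg_ne_zero.2 one_ne_zero) (neg_ne_zero.2 one_ne_zero)
  rw [neg_mul_neg, one_mul, nu_one ν hνmul] at h; omega

lemma nu_neg (hνmul : ∀ x y : F, x ≠ 0 → y ≠ 0 → ν (x * y) = ν x + ν y)
    {x : F} (hx : x ≠ 0) : ν (-x) = ν x := by
  have h := hνmul (-1) x (neg_ne_zero.2 one_ne_zero) hx
  rw [neg_one_mul] at h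
  rw [h, nu_neg_one ν hνmul]; omega

lemma nu_inv (hνmul : ∀ x y : F, x ≠ 0 → y ≠ 0 → ν (x * y) = ν x + ν y)
    {x : F} (hx : x ≠ 0) : ν x⁻¹ = -ν x := by
  have h := hνmul x x⁻¹ hx (inv_ne_zero hx)
  rw [mul_inv_cancel₀ hx, nu_one ν hνmul] at h; omega

lemma nu_pow (hνmul : ∀ x y : F, x ≠ 0 → y ≠ 0 → ν (x * y) = ν x + ν y)
    {x : F} (hx : x ≠ 0) : ∀ n : ℕ, ν (x ^ n) = n * ν x
  | 0 => by simpa using nu_one ν hνmul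
  | n+1 => by
      rw [pow_succ, hνmul _ _ (pow_ne_zero n hx) hx, nu_pow hνmul hx n]
      push_cast; ring

lemma nu_zpow (hνmul : ∀ x y : F, x ≠ 0 → y ≠ 0 → ν (x * y) = ν x + ν y)
    {x : F} (hx : x ≠ 0) (k : ℤ) : ν (x ^ k) = k * ν x := by
  cases k with
  | ofNat n => simpa using nu_pow ν hνmul hx n
  | negSucc n =>
      rw [zpow_negSucc, nu_inv ν hνmul (pow_ne_zero _ hx), nu_pow ν hνmul hx]
      simp [Int.negSucc_eq]; ring

lemma nu_two_nonneg [CharZero F] (hνmul : ∀ x y : F, x ≠ 0 → y ≠ 0 → ν (x * y) = ν x + ν y)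
    (hνadd : ∀ x y : F, x ≠ 0 → y ≠ 0 → x + y ≠ 0 → min (ν x) (ν y) ≤ ν (x + y)) :
    0 ≤ ν 2 := by
  have h := hνadd 1 1 one_ne_zero one_ne_zero (by norm_num)
  rw [nu_one ν hνmul] at h
  norm_num at h
  exact h

end NuAux
section TopAux
variable {F : Type} [Field F] (ν : F → ℤ)

/-- The closed "ball" `{x | ν x ≥ n}`. -/
def BsetV (n : ℤ) : Set F := {x : F | x = 0 ∨ n ≤ ν x}

lemma BsetV_zero_mem (n : ℤ) : (0 : F) ∈ BsetV ν n := Or.inl rfl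

lemma BsetV_add (hνadd : ∀ x y : F, x ≠ 0 → y ≠ 0 → x + y ≠ 0 → min (ν x) (ν y) ≤ ν (x + y))
    {n : ℤ} {x y : F} (hx : x ∈ BsetV ν n) (hy : y ∈ BsetV ν n) : x + y ∈ BsetV ν n := by
  by_cases hx0 : x = 0
  · simpa [hx0] using hy
  by_cases hy0 : y = 0
  · simpa [hy0] using hx
  by_cases hxy : x + y = 0
  · exact Or.inl hxy
  · right
    have h := hνadd x y hx0 hy0 hxy
    have hx' : n ≤ ν x := hx.resolve_left hx0
    have hy' : n ≤ ν y := hy.resolve_left hy0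
    omega

lemma BsetV_neg (hνmul : ∀ x y : F, x ≠ 0 → y ≠ 0 → ν (x * y) = ν x + ν y)
    {n : ℤ} {x : F} (hx : x ∈ BsetV ν n) : -x ∈ BsetV ν n := by
  by_cases hx0 : x = 0
  · simp [hx0, BsetV_zero_mem]
  · right; rw [nu_neg ν hνmul hx0]; exact hx.resolve_left hx0

variable [TopologicalSpace F] [IsTopologicalRing F]

lemma BsetV_mem_nhds
    (hνnhds : ∀ s : Set F, s ∈ nhds (0 : F) ↔ ∃ n : ℤ, {x : F | x = 0 ∨ n ≤ ν x} ⊆ s) (n : ℤ) : BsetV ν n ∈ 𝓝 (0 : F) :=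
  (hνnhds _).2 ⟨n, fun _ hx => hx⟩

lemma mem_nhds_of_BsetV
    (hνnhds : ∀ s : Set F, s ∈ nhds (0 : F) ↔ ∃ n : ℤ, {x : F | x = 0 ∨ n ≤ ν x} ⊆ s) {x : F} {s : Set F} (n : ℤ)
    (h : ∀ y : F, y - x ∈ BsetV ν n → y ∈ s) : s ∈ 𝓝 x := by
  have hc : ContinuousAt (fun y : F => y - x) x := (continuous_id.sub continuous_const).continuousAt
  have h2 := hc.preimage_mem_nhds (show BsetV ν n ∈ 𝓝 (x - x) by
    simpa using BsetV_mem_nhds ν hνnhds n)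
  exact Filter.mem_of_superset h2 h

lemma isOpen_BsetV
    (hνnhds : ∀ s : Set F, s ∈ nhds (0 : F) ↔ ∃ n : ℤ, {x : F | x = 0 ∨ n ≤ ν x} ⊆ s)
    (hνadd : ∀ x y : F, x ≠ 0 → y ≠ 0 → x + y ≠ 0 → min (ν x) (ν y) ≤ ν (x + y))
    (n : ℤ) : IsOpen (BsetV ν n) := by
  rw [isOpen_iff_mem_nhds]
  intro a ha
  refine mem_nhds_of_BsetV ν hνnhds n (fun y hy => ?_)
  have h := BsetV_add ν hνadd hy ha
  simpa using h

lemma isClosed_BsetV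
    (hνnhds : ∀ s : Set F, s ∈ nhds (0 : F) ↔ ∃ n : ℤ, {x : F | x = 0 ∨ n ≤ ν x} ⊆ s)
    (hνmul : ∀ x y : F, x ≠ 0 → y ≠ 0 → ν (x * y) = ν x + ν y)
    (hνadd : ∀ x y : F, x ≠ 0 → y ≠ 0 → x + y ≠ 0 → min (ν x) (ν y) ≤ ν (x + y))
    (n : ℤ) : IsClosed (BsetV ν n) := by
  rw [← isOpen_compl_iff, isOpen_iff_mem_nhds]
  intro a ha
  refine mem_nhds_of_BsetV ν hνnhds n (fun y hy hyB => ?_)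
  apply ha
  have h := BsetV_add ν hνadd hyB (BsetV_neg ν hνmul hy)
  simpa using h

lemma isClosed_zeroF
    (hνnhds : ∀ s : Set F, s ∈ nhds (0 : F) ↔ ∃ n : ℤ, {x : F | x = 0 ∨ n ≤ ν x} ⊆ s)
    (hνmul : ∀ x y : F, x ≠ 0 → y ≠ 0 → ν (x * y) = ν x + ν y) :
    IsClosed ({0} : Set F) := by
  rw [← isOpen_compl_iff, isOpen_iff_mem_nhds]
  intro a ha
  have ha0 : a ≠ 0 := by simpa using ha
  refine mem_nhds_of_BsetV ν hνnhds (ν a + 1) (fun y hy => ?_)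
  simp only [Set.mem_compl_iff, Set.mem_singleton_iff]
  intro hy0
  subst hy0
  rcases hy with h | h
  · exact ha0 (by simpa using h)
  · rw [zero_sub, nu_neg ν hνmul ha0] at h; omega

lemma t2F
    (hνnhds : ∀ s : Set F, s ∈ nhds (0 : F) ↔ ∃ n : ℤ, {x : F | x = 0 ∨ n ≤ ν x} ⊆ s)
    (hνmul : ∀ x y : F, x ≠ 0 → y ≠ 0 → ν (x * y) = ν x + ν y) : T2Space F :=
  IsTopologicalAddGroup.t2Space_iff_zero_closed.mpr (isClosed_zeroF ν hνnhds hνmul)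

end TopAux
section LCAux
variable (p : ℕ) [Fact p.Prime]
variable {F : Type} [Field F] [TopologicalSpace F] [IsTopologicalRing F]
  [Algebra ℚ_[p] F] [FiniteDimensional ℚ_[p] F] (ν : F → ℤ)

lemma continuous_algebraMap_padic
    (hνnhds : ∀ s : Set F, s ∈ nhds (0 : F) ↔ ∃ n : ℤ, {x : F | x = 0 ∨ n ≤ ν x} ⊆ s)
    (hνp : 0 < ν ((p : F)))
    (hνext : ∀ x : ℚ_[p], x ≠ 0 → ν (algebraMap ℚ_[p] F x) = ν ((p : F)) * x.valuation) :
    Continuous (algebraMap ℚ_[p] F) := by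
  apply continuous_of_continuousAt_zero (algebraMap ℚ_[p] F)
  rw [ContinuousAt, map_zero]
  intro s hs
  obtain ⟨n, hn⟩ := (hνnhds s).1 hs
  rw [Filter.mem_map]
  have hp1 : (1 : ℝ) < p := by exact_mod_cast (Fact.out : p.Prime).one_lt
  have hball : Metric.ball (0 : ℚ_[p]) ((p : ℝ) ^ (-(max n 0))) ∈ 𝓝 (0 : ℚ_[p]) :=
    Metric.ball_mem_nhds _ (by positivity)
  refine Filter.mem_of_superset hball fun x hx => hn ?_
  by_cases hx0 : x = 0
  · exact Or.inl (by simp [hx0])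
  right
  have hnorm : ‖x‖ = (p : ℝ) ^ (-x.valuation) := Padic.norm_eq_zpow_neg_valuation hx0
  have hlt : (p : ℝ) ^ (-x.valuation) < (p : ℝ) ^ (-(max n 0)) := by
    rw [← hnorm]
    simpa [dist_eq_norm] using hx
  have hval : max n 0 < x.valuation := by
    have := (zpow_lt_zpow_iff_right₀ hp1).1 hlt
    omega
  rw [hνext x hx0]
  have h1 : (1 : ℤ) ≤ ν ((p : F)) := hνp
  have h2 : x.valuation ≤ ν ((p : F)) * x.valuation :=
    le_mul_of_one_le_left (by omega) h1
  have h3 : n ≤ max n 0 := le_max_left n 0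
  linarith

lemma locallyCompactF
    (hνnhds : ∀ s : Set F, s ∈ nhds (0 : F) ↔ ∃ n : ℤ, {x : F | x = 0 ∨ n ≤ ν x} ⊆ s)
    (hνmul : ∀ x y : F, x ≠ 0 → y ≠ 0 → ν (x * y) = ν x + ν y)
    (hνp : 0 < ν ((p : F)))
    (hνext : ∀ x : ℚ_[p], x ≠ 0 → ν (algebraMap ℚ_[p] F x) = ν ((p : F)) * x.valuation) :
    LocallyCompactSpace F := by
  haveI : T2Space F := t2F ν hνnhds hνmul
  haveI : ContinuousSMul ℚ_[p] F := by
    refine ⟨?_⟩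
    have hc := continuous_algebraMap_padic p ν hνnhds hνp hνext
    have heq : (fun q : ℚ_[p] × F => q.1 • q.2)
        = fun q : ℚ_[p] × F => algebraMap ℚ_[p] F q.1 * q.2 := by
      funext q; rw [Algebra.smul_def]
    rw [heq]
    exact ((hc.comp continuous_fst).mul continuous_snd)
  let b := Module.Basis.ofVectorSpace ℚ_[p] F
  let e := b.equivFun.toContinuousLinearEquiv
  exact (Homeomorph.locallyCompactSpace_iff e.toHomeomorph).2 inferInstance

end LCAux
section CptAux
variable (p : ℕ) [Fact p.Prime]
variable {F : Type} [Field F] [TopologicalSpace F] [IsTopologicalRing F]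
  [Algebra ℚ_[p] F] [FiniteDimensional ℚ_[p] F] (ν : F → ℤ)

lemma isCompact_BsetV
    (hνnhds : ∀ s : Set F, s ∈ nhds (0 : F) ↔ ∃ n : ℤ, {x : F | x = 0 ∨ n ≤ ν x} ⊆ s)
    (hνmul : ∀ x y : F, x ≠ 0 → y ≠ 0 → ν (x * y) = ν x + ν y)
    (hνadd : ∀ x y : F, x ≠ 0 → y ≠ 0 → x + y ≠ 0 → min (ν x) (ν y) ≤ ν (x + y))
    (hνp : 0 < ν ((p : F)))
    (hνext : ∀ x : ℚ_[p], x ≠ 0 → ν (algebraMap ℚ_[p] F x) = ν ((p : F)) * x.valuation)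
    {ϖ : F} (hϖ0 : ϖ ≠ 0) (hϖ1 : ν ϖ = 1) (k : ℤ) :
    IsCompact (BsetV ν k : Set F) := by
  haveI := locallyCompactF p ν hνnhds hνmul hνp hνext
  obtain ⟨K, hK, hKn⟩ := exists_compact_mem_nhds (0 : F)
  obtain ⟨n, hn⟩ := (hνnhds K).1 hKn
  have hBn : IsCompact (BsetV ν n : Set F) :=
    hK.of_isClosed_subset (isClosed_BsetV ν hνnhds hνmul hνadd n) hn
  have hzpow : ∀ (m : ℤ) (y : F), y ≠ 0 → ν (ϖ ^ m * y) = m + ν y := by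
    intro m y hy
    rw [hνmul _ _ (zpow_ne_zero _ hϖ0) hy, nu_zpow ν hνmul hϖ0, hϖ1, mul_one]
  have himg : (BsetV ν k : Set F) = (fun x => ϖ ^ (k - n) * x) '' BsetV ν n := by
    ext y
    constructor
    · intro hy
      refine ⟨ϖ ^ (n - k) * y, ?_, ?_⟩
      · rcases hy with hy0 | hy
        · exact Or.inl (by rw [hy0, mul_zero])
        · by_cases hy0 : y = 0
          · exact Or.inl (by rw [hy0, mul_zero])
          · exact Or.inr (by rw [hzpow _ _ hy0]; omega)
      · show ϖ ^ (k - n) * (ϖ ^ (n - k) * y) = y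
        rw [← mul_assoc, ← zpow_add₀ hϖ0]
        norm_num
    · rintro ⟨x, hx, rfl⟩
      show ϖ ^ (k - n) * x ∈ BsetV ν k
      rcases hx with hx0 | hx
      · exact Or.inl (by rw [hx0, mul_zero])
      · by_cases hx0 : x = 0
        · exact Or.inl (by rw [hx0, mul_zero])
        · exact Or.inr (by rw [hzpow _ _ hx0]; omega)
  rw [himg]
  exact hBn.image (continuous_mul_left _)

lemma isCompact_CC
    (hνnhds : ∀ s : Set F, s ∈ nhds (0 : F) ↔ ∃ n : ℤ, {x : F | x = 0 ∨ n ≤ ν x} ⊆ s)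
    (hνmul : ∀ x y : F, x ≠ 0 → y ≠ 0 → ν (x * y) = ν x + ν y)
    (hνadd : ∀ x y : F, x ≠ 0 → y ≠ 0 → x + y ≠ 0 → min (ν x) (ν y) ≤ ν (x + y))
    (hνp : 0 < ν ((p : F)))
    (hνext : ∀ x : ℚ_[p], x ≠ 0 → ν (algebraMap ℚ_[p] F x) = ν ((p : F)) * x.valuation)
    {ϖ : F} (hϖ0 : ϖ ≠ 0) (hϖ1 : ν ϖ = 1) (m : ℤ) :
    IsCompact {g : SL2 F | ∀ i j : Fin 2, (g : Mat F) i j ∈ BsetV ν m} := by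
  haveI : T2Space F := t2F ν hνnhds hνmul
  have hB : IsCompact (BsetV ν m : Set F) :=
    isCompact_BsetV p ν hνnhds hνmul hνadd hνp hνext hϖ0 hϖ1 m
  have hind : Topology.IsInducing (fun g : SL2 F => (g : Mat F)) := ⟨rfl⟩
  rw [hind.isCompact_iff]
  have himg : (fun g : SL2 F => (g : Mat F)) '' {g : SL2 F | ∀ i j : Fin 2, (g : Mat F) i j ∈ BsetV ν m}
      = (Set.univ.pi fun _ : Fin 2 => Set.univ.pi fun _ : Fin 2 => (BsetV ν m : Set F))
        ∩ {A : Mat F | A.det = 1} := by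
    ext A
    constructor
    · rintro ⟨g, hg, rfl⟩
      exact ⟨by intro i _; intro j _; exact hg i j, g.2⟩
    · rintro ⟨h1, h2⟩
      exact ⟨⟨A, h2⟩, fun i j => h1 i (Set.mem_univ i) j (Set.mem_univ j), rfl⟩
  rw [himg]
  refine IsCompact.inter_right ?_ ?_
  · exact isCompact_univ_pi fun _ => isCompact_univ_pi fun _ => hB
  · have : {A : Mat F | A.det = 1}
        = (fun A : Mat F => A 0 0 * A 1 1 - A 0 1 * A 1 0) ⁻¹' {1} := by
      ext A
      simp [Matrix.det_fin_two]
    suffices h : IsClosed ((fun A : Mat F => A 0 0 * A 1 1 - A 0 1 * A 1 0) ⁻¹' ({1} : Set F)) by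
      rw [← this] at h; exact h
    refine IsClosed.preimage ?_ isClosed_singleton
    have hij : ∀ i j : Fin 2, Continuous fun A : Mat F => A i j := by
      intro i j
      exact continuous_apply_apply i j
    exact (((hij 0 0).mul (hij 1 1)).sub ((hij 0 1).mul (hij 1 0)))

end CptAux
section MainAux
variable {F : Type} [Field F]

lemma mem_BsetV {ν : F → ℤ} {n : ℤ} {x : F} : x ∈ BsetV ν n ↔ (x = 0 ∨ n ≤ ν x) := Iff.rfl

lemma tau_left {h : SL2 F} (hh : h ∈ (Hset : Set (SL2 F))) (g : SL2 F) :
    tauSL (h * g) = tauSL g := by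
  unfold tauSL
  rw [theta_mul, theta_fixed hh]
  group

lemma isClopen_S [TopologicalSpace F] [IsTopologicalRing F]
    (ν : F → ℤ)
    (hνnhds : ∀ s : Set F, s ∈ nhds (0 : F) ↔ ∃ n : ℤ, {x : F | x = 0 ∨ n ≤ ν x} ⊆ s)
    (hνmul : ∀ x y : F, x ≠ 0 → y ≠ 0 → ν (x * y) = ν x + ν y)
    (hνadd : ∀ x y : F, x ≠ 0 → y ≠ 0 → x + y ≠ 0 → min (ν x) (ν y) ≤ ν (x + y))
    (μ : ℤ) :
    IsClopen {g : SL2 F | CartanLE ν ((tauSL g : SL2 F) : Mat F) μ} := by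
  have hB : IsClopen (BsetV ν (-μ) : Set F) :=
    ⟨isClosed_BsetV ν hνnhds hνmul hνadd _, isOpen_BsetV ν hνnhds hνadd _⟩
  have hcoord : ∀ i j : Fin 2, Continuous fun g : SL2 F => (g : Mat F) i j := by
    intro i j
    exact (continuous_apply_apply i j).comp continuous_subtype_val
  have hset : {g : SL2 F | CartanLE ν ((tauSL g : SL2 F) : Mat F) μ}
      = ((fun g : SL2 F => (g : Mat F) 0 0 * (g : Mat F) 1 1 + (g : Mat F) 0 1 * (g : Mat F) 1 0)
            ⁻¹' BsetV ν (-μ))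
        ∩ ((fun g : SL2 F => 2 * ((g : Mat F) 0 1 * (g : Mat F) 1 1)) ⁻¹' BsetV ν (-μ))
        ∩ ((fun g : SL2 F => 2 * ((g : Mat F) 0 0 * (g : Mat F) 1 0)) ⁻¹' BsetV ν (-μ)) := by
    ext g
    simp only [Set.mem_setOf_eq, Set.mem_inter_iff, Set.mem_preimage, CartanLE, tau_coe,
      mem_BsetV]
    constructor
    · intro h
      refine ⟨⟨?_, ?_⟩, ?_⟩
      · have h' := h 0 0
        exact h'
      · have h' := h 0 1
        exact h'
      · have h' := h 1 0
        exact h'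
    · rintro ⟨⟨h1, h2⟩, h3⟩ i j
      fin_cases i <;> fin_cases j <;>
        simp only [Matrix.cons_val', Matrix.cons_val_zero, Matrix.empty_val',
          Matrix.cons_val_fin_one, Matrix.cons_val_one, Matrix.head_cons,
          Matrix.head_fin_const, Fin.isValue]
      · exact h1
      · exact h2
      · exact h3
      · exact h1
  rw [hset]
  exact (((hB.preimage (((hcoord 0 0).mul (hcoord 1 1)).add ((hcoord 0 1).mul (hcoord 1 0)))).inter
    (hB.preimage (continuous_const.mul ((hcoord 0 1).mul (hcoord 1 1))))).inter
    (hB.preimage (continuous_const.mul ((hcoord 0 0).mul (hcoord 1 0)))))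

lemma locConst_indicator {X : Type} [TopologicalSpace X] {S : Set X} (hS : IsClopen S)
    (f : X → ℝ) (hf : ∀ x, f x = if x ∈ S then 1 else 0) : IsLocallyConstant f := by
  intro s
  have hpre : f ⁻¹' s = (if (1 : ℝ) ∈ s then S else ∅) ∪ (if (0 : ℝ) ∈ s then Sᶜ else ∅) := by
    ext x
    by_cases hx : x ∈ S <;> by_cases h1 : (1 : ℝ) ∈ s <;> by_cases h0 : (0 : ℝ) ∈ s <;>
      simp [hf x, hx, h1, h0]
  rw [hpre]
  apply IsOpen.union
  · split
    · exact hS.2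
    · exact isOpen_empty
  · split
    · exact hS.compl.2
    · exact isOpen_empty

end MainAux

theorem truncation_compactly_supported_mod_H
    (p : ℕ) [Fact p.Prime] (hp2 : p ≠ 2)
    (F : Type) [Field F] [CharZero F] [TopologicalSpace F] [IsTopologicalRing F]
    [MeasurableSpace F] [BorelSpace F]
    [Algebra ℚ_[p] F] [FiniteDimensional ℚ_[p] F]
    (ν : F → ℤ) (ϖ : F)
    (hϖ0 : ϖ ≠ 0) (hϖ1 : ν ϖ = 1)
    (hνmul : ∀ x y : F, x ≠ 0 → y ≠ 0 → ν (x * y) = ν x + ν y)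
    (hνadd : ∀ x y : F, x ≠ 0 → y ≠ 0 → x + y ≠ 0 → min (ν x) (ν y) ≤ ν (x + y))
    (hνp : 0 < ν ((p : F)))
    (hνext : ∀ x : ℚ_[p], x ≠ 0 → ν (algebraMap ℚ_[p] F x) = ν ((p : F)) * x.valuation)
    (hνnhds : ∀ s : Set F, s ∈ nhds (0 : F) ↔ ∃ n : ℤ, {x : F | x = 0 ∨ n ≤ ν x} ⊆ s) :
    ∀ μ : ℤ, 0 ≤ μ →
      (∃ C : Set (SL2 F), IsCompact C ∧
        {g : SL2 F | CartanLE ν ((tauSL g : SL2 F) : Mat F) μ} ⊆ (Hset : Set (SL2 F)) * C) ∧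
      (∀ h ∈ (Hset : Set (SL2 F)), ∀ g : SL2 F, omegaBar ν (h * g) μ = omegaBar ν g μ) ∧
      IsLocallyConstant (fun g : SL2 F => omegaBar ν g μ) := by
  intro μ hμ
  have two_ne : (2 : F) ≠ 0 := two_ne_zero
  have h2nn : 0 ≤ ν 2 := nu_two_nonneg ν hνmul hνadd
  set m : ℤ := μ + ν 2 with hm
  refine ⟨⟨{g : SL2 F | ∀ i j : Fin 2, (g : Mat F) i j ∈ BsetV ν (-m)},
    isCompact_CC p ν hνnhds hνmul hνadd hνp hνext hϖ0 hϖ1 (-m), ?_⟩, ?_, ?_⟩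
  · intro g hg
    simp only [Set.mem_setOf_eq] at hg
    set a : F := (g : Mat F) 0 0 with ha'
    set b : F := (g : Mat F) 0 1 with hb'
    set c : F := (g : Mat F) 1 0 with hc'
    set d : F := (g : Mat F) 1 1 with hd'
    have hdet : a * d - b * c = 1 := det_coords g
    have h00 : (a * d + b * c = 0) ∨ -μ ≤ ν (a * d + b * c) := by
      have h' := hg 0 0
      rw [tau_coe] at h'
      simpa using h'
    have h01 : (2 * (b * d) = 0) ∨ -μ ≤ ν (2 * (b * d)) := by
      have h' := hg 0 1
      rw [tau_coe] at h'
      exact h'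
    have h10 : (2 * (a * c) = 0) ∨ -μ ≤ ν (2 * (a * c)) := by
      have h' := hg 1 0
      rw [tau_coe] at h'
      exact h'
    -- the four pair bounds
    have hbd : b ≠ 0 → d ≠ 0 → -(μ + ν 2) ≤ ν b + ν d := by
      intro hb hd
      have hne : 2 * (b * d) ≠ 0 := mul_ne_zero two_ne (mul_ne_zero hb hd)
      rcases h01 with h | h
      · exact absurd h hne
      · rw [hνmul 2 (b * d) two_ne (mul_ne_zero hb hd), hνmul b d hb hd] at h
        omega
    have hac : a ≠ 0 → c ≠ 0 → -(μ + ν 2) ≤ ν a + ν c := by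
      intro ha hc
      have hne : 2 * (a * c) ≠ 0 := mul_ne_zero two_ne (mul_ne_zero ha hc)
      rcases h10 with h | h
      · exact absurd h hne
      · rw [hνmul 2 (a * c) two_ne (mul_ne_zero ha hc), hνmul a c ha hc] at h
        omega
    have had : a ≠ 0 → d ≠ 0 → -(μ + ν 2) ≤ ν a + ν d := by
      intro ha hd
      have key : 2 * (a * d) = 1 + (a * d + b * c) := by linear_combination hdet
      have hne : 2 * (a * d) ≠ 0 := mul_ne_zero two_ne (mul_ne_zero ha hd)
      have hν2ad : ν (2 * (a * d)) = ν 2 + (ν a + ν d) := by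
        rw [hνmul 2 (a * d) two_ne (mul_ne_zero ha hd), hνmul a d ha hd]
      by_cases hs0 : a * d + b * c = 0
      · have hone : ν (2 * (a * d)) = 0 := by
          rw [hs0, add_zero] at key
          rw [key]
          exact nu_one ν hνmul
        omega
      · rcases h00 with h | h
        · exact absurd h hs0
        · have hmin := hνadd 1 (a * d + b * c) one_ne_zero hs0 (by rw [← key]; exact hne)
          rw [nu_one ν hνmul, ← key, hν2ad] at hmin
          omega
    have hbc : b ≠ 0 → c ≠ 0 → -(μ + ν 2) ≤ ν b + ν c := by
      intro hb hc
      have key : 2 * (b * c) = (a * d + b * c) + (-1) := by linear_combination (-1 : F) * hdet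
      have hne : 2 * (b * c) ≠ 0 := mul_ne_zero two_ne (mul_ne_zero hb hc)
      have hν2bc : ν (2 * (b * c)) = ν 2 + (ν b + ν c) := by
        rw [hνmul 2 (b * c) two_ne (mul_ne_zero hb hc), hνmul b c hb hc]
      by_cases hs0 : a * d + b * c = 0
      · have hone : ν (2 * (b * c)) = 0 := by
          rw [hs0, zero_add] at key
          rw [key]
          exact nu_neg_one ν hνmul
        omega
      · rcases h00 with h | h
        · exact absurd h hs0
        · have hmin := hνadd (a * d + b * c) (-1) hs0 (neg_ne_zero.2 one_ne_zero)
            (by rw [← key]; exact hne)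
          rw [nu_neg_one ν hνmul, ← key, hν2bc] at hmin
          omega
    have hab : ¬(a = 0 ∧ b = 0) := by
      rintro ⟨h1, h1'⟩
      rw [h1, h1'] at hdet
      simp at hdet
    have hcd : ¬(c = 0 ∧ d = 0) := by
      rintro ⟨h1, h1'⟩
      rw [h1, h1'] at hdet
      simp at hdet
    -- choose k
    have hkex : ∃ k : ℤ, (a = 0 ∨ -m ≤ ν a - k) ∧ (b = 0 ∨ -m ≤ ν b - k) ∧
        (c = 0 ∨ -m ≤ ν c + k) ∧ (d = 0 ∨ -m ≤ ν d + k) := by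
      have hA : ∃ A : ℤ, (a ≠ 0 → A ≤ ν a) ∧ (b ≠ 0 → A ≤ ν b) ∧
          (∀ x : ℤ, (a ≠ 0 → -(μ + ν 2) ≤ ν a + x) → (b ≠ 0 → -(μ + ν 2) ≤ ν b + x) →
            -(μ + ν 2) ≤ A + x) := by
        by_cases ha : a = 0
        · have hb : b ≠ 0 := fun hb => hab ⟨ha, hb⟩
          exact ⟨ν b, fun h => absurd ha h, fun _ => le_refl _,
            fun x _ h2 => h2 hb⟩
        · by_cases hb : b = 0
          · exact ⟨ν a, fun _ => le_refl _, fun h => absurd hb h, fun x h1 _ => h1 ha⟩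
          · refine ⟨min (ν a) (ν b), fun _ => min_le_left _ _, fun _ => min_le_right _ _,
              fun x h1 h2 => ?_⟩
            have := h1 ha
            have := h2 hb
            omega
      obtain ⟨A, hAa, hAb, hAx⟩ := hA
      refine ⟨A + m, ?_, ?_, ?_, ?_⟩
      · by_cases ha : a = 0
        · exact Or.inl ha
        · exact Or.inr (by have := hAa ha; omega)
      · by_cases hb : b = 0
        · exact Or.inl hb
        · exact Or.inr (by have := hAb hb; omega)
      · by_cases hc : c = 0
        · exact Or.inl hc
        · refine Or.inr ?_
          have := hAx (ν c) (fun ha => by have := hac ha hc; omega)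
            (fun hb => by have := hbc hb hc; omega)
          omega
      · by_cases hd : d = 0
        · exact Or.inl hd
        · refine Or.inr ?_
          have := hAx (ν d) (fun ha => by have := had ha hd; omega)
            (fun hb => by have := hbd hb hd; omega)
          omega
    obtain ⟨k, hka, hkb, hkc, hkd⟩ := hkex
    have ht0 : (ϖ : F) ^ k ≠ 0 := zpow_ne_zero _ hϖ0
    have hνt : ν (ϖ ^ k) = k := by rw [nu_zpow ν hνmul hϖ0, hϖ1, mul_one]
    have hνti : ν ((ϖ ^ k)⁻¹) = -k := by rw [nu_inv ν hνmul ht0, hνt]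
    refine Set.mem_mul.2 ⟨Hmat (ϖ ^ k), Hmat_mem _, (Hmat (ϖ ^ k))⁻¹ * g, ?_,
      mul_inv_cancel_left _ _⟩
    intro i j
    rw [Hmat_inv_mul_coe ht0]
    fin_cases i <;> fin_cases j
    · show (ϖ ^ k)⁻¹ * a ∈ BsetV ν (-m)
      by_cases ha : a = 0
      · exact Or.inl (by rw [ha, mul_zero])
      · refine Or.inr ?_
        rw [hνmul _ _ (inv_ne_zero ht0) ha, hνti]
        have := hka.resolve_left ha
        omega
    · show (ϖ ^ k)⁻¹ * b ∈ BsetV ν (-m)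
      by_cases hb : b = 0
      · exact Or.inl (by rw [hb, mul_zero])
      · refine Or.inr ?_
        rw [hνmul _ _ (inv_ne_zero ht0) hb, hνti]
        have := hkb.resolve_left hb
        omega
    · show ϖ ^ k * c ∈ BsetV ν (-m)
      by_cases hc : c = 0
      · exact Or.inl (by rw [hc, mul_zero])
      · refine Or.inr ?_
        rw [hνmul _ _ ht0 hc, hνt]
        have := hkc.resolve_left hc
        omega
    · show ϖ ^ k * d ∈ BsetV ν (-m)
      by_cases hd : d = 0
      · exact Or.inl (by rw [hd, mul_zero])
      · refine Or.inr ?_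
        rw [hνmul _ _ ht0 hd, hνt]
        have := hkd.resolve_left hd
        omega
  · intro h hh g
    unfold omegaBar
    rw [tau_left hh g]
  · have hS := isClopen_S ν hνnhds hνmul hνadd μ
    apply locConst_indicator hS
    intro g
    rfl

end
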